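/- arXiv:2006.05001 — 2 statements merged into one kernel-verified Lean document; each statement's English description precedes it below -/
import Mathlib

section
/- A continuous piecewise affine function f: ℝ^n → ℝ that is convex equals the pointwise maximum of finitely many affine functions: there exist a_1,...,a_N ∈ ℝ^n and c_1,...,c_N ∈ ℝ such that f(x) = max_{i=1,...,N} (a_i·x + c_i) for all x ∈ ℝ^n. -/
open Matrix

/-- A convex polyhedron in `ℝ^n`: a finite intersection of closed half-spaces. -/
def IsPolyhedron {n : ℕ} (P : Set (Fin n → ℝ)) : Prop :=
  ∃ (k : ℕ) (a : Fin k → Fin n → ℝ) (c : Fin k → ℝ), P = {x | ∀ i, a i ⬝ᵥ x ≤ c i}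

/-- A continuous piecewise affine function `ℝ^n → ℝ`: continuous, and there is a finite
collection of convex polyhedra covering `ℝ^n` on each of which `f` is affine. -/
def IsCPWA {n : ℕ} (f : (Fin n → ℝ) → ℝ) : Prop :=
  Continuous f ∧ ∃ (M : ℕ) (P : Fin M → Set (Fin n → ℝ)),
    (∀ i, IsPolyhedron (P i)) ∧ (⋃ i, P i) = Set.univ ∧
    ∀ i, ∃ (a : Fin n → ℝ) (c : ℝ), ∀ x ∈ P i, f x = a ⬝ᵥ x + c

lemma continuous_affine_aux {n : ℕ} (a : Fin n → ℝ) (c : ℝ) :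
    Continuous fun x : Fin n → ℝ => a ⬝ᵥ x + c := by
  apply Continuous.add _ continuous_const
  exact continuous_finset_sum Finset.univ fun i _ => continuous_const.mul (continuous_apply i)

lemma isPolyhedron_closed {n : ℕ} {P : Set (Fin n → ℝ)} (h : IsPolyhedron P) : IsClosed P := by
  obtain ⟨k, a, c, rfl⟩ := h
  have : {x : Fin n → ℝ | ∀ i, a i ⬝ᵥ x ≤ c i} = ⋂ i, {x | a i ⬝ᵥ x ≤ c i} := by
    ext x; simp
  rw [this]
  refine isClosed_iInter fun i => isClosed_le ?_ continuous_const
  simpa using continuous_affine_aux (a i) 0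

lemma union_empty_interior {X : Type*} [TopologicalSpace X] {A B : Set X}
    (hA : IsClosed A) (hiA : interior A = ∅) (hiB : interior B = ∅) :
    interior (A ∪ B) = ∅ := by
  set U := interior (A ∪ B) with hU
  have hUB : U \ A ⊆ interior B := by
    apply (isOpen_interior.sdiff hA).subset_interior_iff.2
    intro x hx
    rcases interior_subset hx.1 with h | h
    · exact absurd h hx.2
    · exact h
  have hUA : U ⊆ A := by
    intro x hx
    by_contra hxA
    have : x ∈ interior B := hUB ⟨hx, hxA⟩
    rw [hiB] at this; exact this
  have : U ⊆ interior A := isOpen_interior.subset_interior_iff.2 hUA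
  rw [hiA] at this
  exact Set.eq_empty_of_subset_empty this

lemma finset_union_empty_interior {X ι : Type*} [TopologicalSpace X] (s : Finset ι)
    (P : ι → Set X) (h : ∀ i ∈ s, IsClosed (P i) ∧ interior (P i) = ∅) :
    interior (⋃ i ∈ s, P i) = ∅ := by
  classical
  induction s using Finset.induction_on with
  | empty => simp
  | insert j s hni ih =>
    rw [Finset.set_biUnion_insert]
    exact union_empty_interior (h j (Finset.mem_insert_self j s)).1
      (h j (Finset.mem_insert_self j s)).2
      (ih fun i hi => h i (Finset.mem_insert_of_mem hi))

/-- An affine function agreeing with a convex function on a set with nonempty interior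
is a global lower bound. -/
lemma affine_le_of_convexOn {n : ℕ} {f : (Fin n → ℝ) → ℝ}
    (hconv : ConvexOn ℝ Set.univ f) {P : Set (Fin n → ℝ)} {a : Fin n → ℝ} {c : ℝ}
    (haff : ∀ x ∈ P, f x = a ⬝ᵥ x + c) (hint : (interior P).Nonempty)
    (x : Fin n → ℝ) : a ⬝ᵥ x + c ≤ f x := by
  obtain ⟨p, hp⟩ := hint
  obtain ⟨ε, hε, hball⟩ := Metric.isOpen_iff.1 isOpen_interior p hp
  set t : ℝ := ε / (2 * (‖x - p‖ + 1)) with ht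
  have hnorm_pos : (0:ℝ) < ‖x - p‖ + 1 := by positivity
  have ht_pos : 0 < t := by positivity
  set q : Fin n → ℝ := p - t • (x - p) with hq
  have hq_mem : q ∈ P := by
    apply interior_subset
    apply hball
    rw [Metric.mem_ball, dist_eq_norm]
    have : q - p = -(t • (x - p)) := by rw [hq]; abel
    rw [this, norm_neg, norm_smul, Real.norm_eq_abs, abs_of_pos ht_pos]
    calc t * ‖x - p‖ ≤ t * (‖x - p‖ + 1) := by
          apply mul_le_mul_of_nonneg_left (by linarith) ht_pos.le
      _ = ε / 2 := by
          rw [ht]; field_simp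
      _ < ε := by linarith
  -- p = s • q + t' • x  where s = 1/(1+t), t' = t/(1+t)
  set s : ℝ := 1 / (1 + t) with hs
  set t' : ℝ := t / (1 + t) with ht'
  have h1t : (0:ℝ) < 1 + t := by linarith
  have hs_pos : 0 < s := by positivity
  have ht'_pos : 0 < t' := by positivity
  have hsum : s + t' = 1 := by rw [hs, ht']; field_simp
  have hcomb : p = s • q + t' • x := by
    rw [hq, hs, ht']
    funext j
    simp only [Pi.add_apply, Pi.smul_apply, Pi.sub_apply, smul_eq_mul]
    field_simp
    ring
  have hfp := hconv.2 (Set.mem_univ q) (Set.mem_univ x) hs_pos.le ht'_pos.le hsum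
  rw [← hcomb] at hfp
  have hfp' : f p = a ⬝ᵥ p + c := haff p (interior_subset hp)
  have hfq : f q = a ⬝ᵥ q + c := haff q hq_mem
  have hdot : a ⬝ᵥ p = s * (a ⬝ᵥ q) + t' * (a ⬝ᵥ x) := by
    rw [hcomb, dotProduct_add, dotProduct_smul, dotProduct_smul]
    simp [smul_eq_mul]
  have key : s * (a ⬝ᵥ q + c) + t' * (a ⬝ᵥ x + c) ≤ s * (f q) + t' * f x := by
    calc s * (a ⬝ᵥ q + c) + t' * (a ⬝ᵥ x + c)
        = a ⬝ᵥ p + c := by rw [hdot]; linear_combination c * hsum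
      _ = f p := hfp'.symm
      _ ≤ s * f q + t' * f x := by
          have := hfp
          simp only [smul_eq_mul] at this
          exact this
  rw [hfq] at key
  have : t' * (a ⬝ᵥ x + c) ≤ t' * f x := by linarith
  exact le_of_mul_le_mul_left this ht'_pos

/-- A convex continuous piecewise affine function `f : ℝ^n → ℝ` equals the
pointwise maximum of finitely many affine functions: there are `a_1,…,a_N ∈ ℝ^n` and
`c_1,…,c_N ∈ ℝ` with `f(x) = max_i (a_i ⬝ x + c_i)` for all `x`. -/
theorem convex_cpwa_eq_max_affine (n : ℕ) (f : (Fin n → ℝ) → ℝ)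
    (hf : IsCPWA f) (hconv : ConvexOn ℝ Set.univ f) :
    ∃ (N : ℕ) (a : Fin (N + 1) → Fin n → ℝ) (c : Fin (N + 1) → ℝ),
      ∀ x, f x = Finset.univ.sup' Finset.univ_nonempty (fun i => a i ⬝ᵥ x + c i) := by
  classical
  obtain ⟨hcont, M, P, hpoly, hcover, haff⟩ := hf
  choose a c haffc using haff
  have hM : M ≠ 0 := by
    rintro rfl
    have h1 : (Set.univ : Set (Fin n → ℝ)).Nonempty := Set.univ_nonempty
    rw [← hcover] at h1
    simp [Set.iUnion_of_empty] at h1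
  obtain ⟨N, rfl⟩ : ∃ N, M = N + 1 :=
    ⟨M - 1, (Nat.succ_pred_eq_of_pos (Nat.pos_of_ne_zero hM)).symm⟩
  have hclosed : ∀ i, IsClosed (P i) := fun i => isPolyhedron_closed (hpoly i)
  -- there is at least one piece with nonempty interior
  have hexists : ∃ i, (interior (P i)).Nonempty := by
    by_contra h
    push_neg at h
    have := finset_union_empty_interior Finset.univ P (fun i _ => ⟨hclosed i, h i⟩)
    rw [show (⋃ i ∈ Finset.univ, P i) = ⋃ i, P i by simp, hcover, interior_univ] at this
    exact (Set.univ_nonempty (α := Fin n → ℝ)).ne_empty this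
  obtain ⟨i₀, hi₀⟩ := hexists
  set pick : Fin (N + 1) → Fin (N + 1) := fun i =>
    if (interior (P i)).Nonempty then i else i₀ with hpick
  have hpick_good : ∀ i, (interior (P (pick i))).Nonempty := by
    intro i
    by_cases hi : (interior (P i)).Nonempty
    · simpa [hpick, if_pos hi] using hi
    · simpa [hpick, if_neg hi] using hi₀
  have hpick_eq : ∀ i, (interior (P i)).Nonempty → pick i = i := by
    intro i hi; simp [hpick, if_pos hi]
  set A : Fin (N + 1) → Fin n → ℝ := fun i => a (pick i) with hA
  set C : Fin (N + 1) → ℝ := fun i => c (pick i) with hC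
  refine ⟨N, A, C, ?_⟩
  have h_le : ∀ i x, A i ⬝ᵥ x + C i ≤ f x := fun i x =>
    affine_le_of_convexOn hconv (haffc (pick i)) (hpick_good i) x
  set S : Set (Fin n → ℝ) := {x | ∃ i, (interior (P i)).Nonempty ∧ x ∈ P i} with hS
  have hDeq : ∀ x ∈ S, f x = Finset.univ.sup' Finset.univ_nonempty (fun i => A i ⬝ᵥ x + C i) := by
    rintro x ⟨i, hi, hxi⟩
    apply le_antisymm
    · have hfx : f x = A i ⬝ᵥ x + C i := by
        simp only [hA, hC, hpick_eq i hi]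
        exact haffc i x hxi
      rw [hfx]
      exact Finset.le_sup' (fun i => A i ⬝ᵥ x + C i) (Finset.mem_univ i)
    · exact Finset.sup'_le _ _ fun j _ => h_le j x
  have hdense : Dense S := by
    set bad : Finset (Fin (N + 1)) :=
      Finset.univ.filter (fun i => ¬(interior (P i)).Nonempty) with hbadS
    have hsub : Sᶜ ⊆ ⋃ i ∈ bad, P i := by
      intro x hx
      have hx' : x ∈ ⋃ i, P i := by rw [hcover]; trivial
      obtain ⟨i, hxi⟩ := Set.mem_iUnion.1 hx'
      have hni : ¬(interior (P i)).Nonempty := fun h => hx ⟨i, h, hxi⟩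
      exact Set.mem_biUnion (Finset.mem_filter.2 ⟨Finset.mem_univ i, hni⟩) hxi
    have hbad : interior (⋃ i ∈ bad, P i) = ∅ := by
      apply finset_union_empty_interior
      intro i hi
      exact ⟨hclosed i, Set.not_nonempty_iff_eq_empty.1 (Finset.mem_filter.1 hi).2⟩
    have hintc : interior Sᶜ = ∅ := by
      apply Set.eq_empty_of_subset_empty
      rw [← hbad]
      exact interior_mono hsub
    rw [dense_iff_closure_eq, closure_eq_compl_interior_compl, hintc, Set.compl_empty]
  have hg : Continuous fun x => Finset.univ.sup' Finset.univ_nonempty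
      (fun i : Fin (N + 1) => A i ⬝ᵥ x + C i) :=
    Continuous.finset_sup'_apply Finset.univ_nonempty fun i _ => continuous_affine_aux (A i) (C i)
  have := Continuous.ext_on hdense hcont hg hDeq
  exact fun x => congrFun this x
end

section
/- Consider, for parameter x ∈ [0, 3], the linear program in z = (z_1, z_2) ∈ ℝ²: minimize z_1 − z_2 subject to −x ≤ z_1, x − 2 ≤ z_1, (7/2)x − 5 ≤ z_1, z_2 ≤ x, z_2 ≤ −(1/2)x + 1, and z_2 ≤ −(5/2)x + 5. For every x ∈ [0, 3] this program has the unique optimizer z_1*(x) = γ(x) = max(−x, x − 2, (7/2)x − 5) and z_2*(x) = −η(x) = min(x, −(1/2)x + 1, −(5/2)x + 5); consequently the linear map T = (1, 1) applied to the optimizer recovers T(z_1*(x), z_2*(x)) = γ(x) − η(x) = f(x), where f is the piecewise affine function equal to 0 for x ≤ 2/3, −(3/2)x + 1 for 2/3 ≤ x ≤ 1, (1/2)x − 1 for 1 ≤ x ≤ 6/5, 3x − 4 for 6/5 ≤ x ≤ 2, and x for x ≥ 2. -/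
/-- For each parameter `x ∈ [0, 3]`, the linear program in `z = (z₁, z₂) ∈ ℝ²`
  minimize `z₁ − z₂`
  subject to `−x ≤ z₁`, `x − 2 ≤ z₁`, `(7/2)x − 5 ≤ z₁`,
             `z₂ ≤ x`, `z₂ ≤ −(1/2)x + 1`, `z₂ ≤ −(5/2)x + 5`
has the unique optimizer `z₁*(x) = γ(x) = max(−x, x − 2, (7/2)x − 5)` and
`z₂*(x) = −η(x) = min(x, −(1/2)x + 1, −(5/2)x + 5)`, and applying the linear map `T = (1, 1)`
recovers `z₁*(x) + z₂*(x) = γ(x) − η(x) = f(x)`, where `f` is the piecewise affine function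
equal to `0` for `x ≤ 2/3`, `−(3/2)x + 1` for `2/3 ≤ x ≤ 1`, `(1/2)x − 1` for `1 ≤ x ≤ 6/5`,
`3x − 4` for `6/5 ≤ x ≤ 2`, and `x` for `x ≥ 2`. -/
theorem example_mpLP_explicit_solution
    (f γ η : ℝ → ℝ)
    (hf₀ : ∀ x : ℝ, x ≤ 2 / 3 → f x = 0)
    (hf₁ : ∀ x : ℝ, 2 / 3 ≤ x → x ≤ 1 → f x = -(3 / 2) * x + 1)
    (hf₂ : ∀ x : ℝ, 1 ≤ x → x ≤ 6 / 5 → f x = (1 / 2) * x - 1)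
    (hf₃ : ∀ x : ℝ, 6 / 5 ≤ x → x ≤ 2 → f x = 3 * x - 4)
    (hf₄ : ∀ x : ℝ, 2 ≤ x → f x = x)
    (hγ : ∀ x : ℝ, γ x = max (-x) (max (x - 2) ((7 / 2) * x - 5)))
    (hη : ∀ x : ℝ, η x = max (-x) (max ((1 / 2) * x - 1) ((5 / 2) * x - 5))) :
    ∀ x : ℝ, 0 ≤ x → x ≤ 3 →
      -- the optimizer z* = (γ x, −η x), where −η x is the stated minimum
      (-η x = min x (min (-(1 / 2) * x + 1) (-(5 / 2) * x + 5))) ∧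
      -- z* is feasible
      (-x ≤ γ x ∧ x - 2 ≤ γ x ∧ (7 / 2) * x - 5 ≤ γ x ∧
        -η x ≤ x ∧ -η x ≤ -(1 / 2) * x + 1 ∧ -η x ≤ -(5 / 2) * x + 5) ∧
      -- z* is optimal
      (∀ z₁ z₂ : ℝ,
        (-x ≤ z₁ ∧ x - 2 ≤ z₁ ∧ (7 / 2) * x - 5 ≤ z₁ ∧
          z₂ ≤ x ∧ z₂ ≤ -(1 / 2) * x + 1 ∧ z₂ ≤ -(5 / 2) * x + 5) →
        γ x - (-η x) ≤ z₁ - z₂) ∧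
      -- z* is the unique optimizer
      (∀ z₁ z₂ : ℝ,
        (-x ≤ z₁ ∧ x - 2 ≤ z₁ ∧ (7 / 2) * x - 5 ≤ z₁ ∧
          z₂ ≤ x ∧ z₂ ≤ -(1 / 2) * x + 1 ∧ z₂ ≤ -(5 / 2) * x + 5) →
        z₁ - z₂ = γ x - (-η x) → z₁ = γ x ∧ z₂ = -η x) ∧
      -- the linear map T = (1, 1) applied to z* recovers f
      (γ x + (-η x) = f x) := by

  intro x hx0 hx3
  have hmin : -η x = min x (min (-(1 / 2) * x + 1) (-(5 / 2) * x + 5)) := by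
    rw [hη, neg_sup, neg_sup]
    congr 1 <;> [skip; congr 1] <;> ring
  refine ⟨hmin, ?_, ?_, ?_, ?_⟩
  · rw [hγ, hmin]
    refine ⟨le_max_left _ _, le_trans (le_max_left _ _) (le_max_right _ _),
      le_trans (le_max_right _ _) (le_max_right _ _), min_le_left _ _,
      le_trans (min_le_right _ _) (min_le_left _ _),
      le_trans (min_le_right _ _) (min_le_right _ _)⟩
  · rintro z₁ z₂ ⟨h1, h2, h3, h4, h5, h6⟩
    have hg : γ x ≤ z₁ := by rw [hγ]; exact max_le h1 (max_le h2 h3)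
    have he : z₂ ≤ -η x := by rw [hmin]; exact le_min h4 (le_min h5 h6)
    linarith
  · rintro z₁ z₂ ⟨h1, h2, h3, h4, h5, h6⟩ heq
    have hg : γ x ≤ z₁ := by rw [hγ]; exact max_le h1 (max_le h2 h3)
    have he : z₂ ≤ -η x := by rw [hmin]; exact le_min h4 (le_min h5 h6)
    constructor <;> linarith
  · rw [hγ, hη]
    rcases le_or_gt x (2/3) with h | h
    · rw [show max (x-2) ((7/2)*x-5) = x-2 from max_eq_left (by linarith),
        show max (-x) (x-2) = -x from max_eq_left (by linarith),
        show max ((1/2)*x-1) ((5/2)*x-5) = (1/2)*x-1 from max_eq_left (by linarith),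
        show max (-x) ((1/2)*x-1) = -x from max_eq_left (by linarith), hf₀ x h]
      ring
    rcases le_or_gt x 1 with h1 | h1
    · rw [show max (x-2) ((7/2)*x-5) = x-2 from max_eq_left (by linarith),
        show max (-x) (x-2) = -x from max_eq_left (by linarith),
        show max ((1/2)*x-1) ((5/2)*x-5) = (1/2)*x-1 from max_eq_left (by linarith),
        show max (-x) ((1/2)*x-1) = (1/2)*x-1 from max_eq_right (by linarith),
        hf₁ x h.le h1]
      ring
    rcases le_or_gt x (6/5) with h2 | h2
    · rw [show max (x-2) ((7/2)*x-5) = x-2 from max_eq_left (by linarith),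
        show max (-x) (x-2) = x-2 from max_eq_right (by linarith),
        show max ((1/2)*x-1) ((5/2)*x-5) = (1/2)*x-1 from max_eq_left (by linarith),
        show max (-x) ((1/2)*x-1) = (1/2)*x-1 from max_eq_right (by linarith),
        hf₂ x h1.le h2]
      ring
    rcases le_or_gt x 2 with h3 | h3
    · rw [show max (x-2) ((7/2)*x-5) = (7/2)*x-5 from max_eq_right (by linarith),
        show max (-x) ((7/2)*x-5) = (7/2)*x-5 from max_eq_right (by linarith),
        show max ((1/2)*x-1) ((5/2)*x-5) = (1/2)*x-1 from max_eq_left (by linarith),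
        show max (-x) ((1/2)*x-1) = (1/2)*x-1 from max_eq_right (by linarith),
        hf₃ x h2.le h3]
      ring
    · rw [show max (x-2) ((7/2)*x-5) = (7/2)*x-5 from max_eq_right (by linarith),
        show max (-x) ((7/2)*x-5) = (7/2)*x-5 from max_eq_right (by linarith),
        show max ((1/2)*x-1) ((5/2)*x-5) = (5/2)*x-5 from max_eq_right (by linarith),
        show max (-x) ((5/2)*x-5) = (5/2)*x-5 from max_eq_right (by linarith),
        hf₄ x h3.le]
      ring
end
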